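/- Let k ≥ 2 be an integer and let n_A, n_B be positive integers. Let V_AB be a real symmetric (2n_A+2n_B)×(2n_A+2n_B) matrix. If there exists a real symmetric 2n_B×2n_B matrix Δ with Δ ≥ iΩ_{n_B} such that the complex Hermitian matrix V_AB − (iΩ_{n_A} ⊕ ((1−1/k)·Δ + (i/k)·Ω_{n_B})) is positive semidefinite, then the complex Hermitian matrix V_AB − (iΩ_{n_A} ⊕ (−(1−2/k)·i·Ω_{n_B})) is positive semidefinite. -/

import Mathlib

open Matrix Complex ComplexOrder

/-- The standard symplectic form on `n` modes: block-diagonal with `n` blocks `[[0,1],[-1,0]]`. -/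
noncomputable def OmegaM (n : ℕ) : Matrix (Fin (2*n)) (Fin (2*n)) ℝ :=
  Matrix.of fun i j =>
    if i.val + 1 = j.val ∧ i.val % 2 = 0 then (1 : ℝ)
    else if j.val + 1 = i.val ∧ j.val % 2 = 0 then -1 else 0

/-- Complexification of a real matrix. -/
noncomputable def cplx {m p : Type*} (M : Matrix m p ℝ) : Matrix m p ℂ :=
  M.map (fun x => (x : ℂ))

lemma OmegaM_transpose (n : ℕ) : (OmegaM n)ᵀ = -OmegaM n := by
  ext i j
  simp only [OmegaM, transpose_apply, of_apply, Matrix.neg_apply]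
  split_ifs <;> try norm_num
  omega

lemma cplx_transpose {m p : Type*} (M : Matrix m p ℝ) : (cplx M)ᵀ = cplx Mᵀ := by
  ext i j; simp [cplx]

lemma cplx_neg {m p : Type*} (M : Matrix m p ℝ) : cplx (-M) = -cplx M := by
  ext i j; simp [cplx]

/-- A block diagonal matrix with PSD bottom-right block and zero elsewhere is PSD. -/
lemma fromBlocks_zero_posSemidef {m p : Type*} [Fintype m] [Fintype p] [DecidableEq m]
    {M : Matrix p p ℂ} (hM : M.PosSemidef) :
    (Matrix.fromBlocks (0 : Matrix m m ℂ) 0 0 M).PosSemidef := by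
  refine Matrix.PosSemidef.of_dotProduct_mulVec_nonneg ?_ ?_
  · unfold Matrix.IsHermitian
    rw [Matrix.fromBlocks_conjTranspose]
    simp [hM.1.eq]
  · intro x
    have hx : x = Sum.elim (x ∘ Sum.inl) (x ∘ Sum.inr) := by
      ext i; cases i <;> rfl
    rw [hx, Matrix.fromBlocks_mulVec]
    simp only [Matrix.zero_mulVec, add_zero, zero_add, Sum.elim_comp_inl, Sum.elim_comp_inr]
    rw [show (star (Sum.elim (x ∘ Sum.inl) (x ∘ Sum.inr)) : (m ⊕ p) → ℂ)
        = Sum.elim (star (x ∘ Sum.inl)) (star (x ∘ Sum.inr)) by ext i; cases i <;> rfl]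
    rw [sumElim_dotProduct_sumElim]
    simpa using hM.dotProduct_mulVec_nonneg (x ∘ Sum.inr)

lemma posSemidef_real_smul {p : Type*} [Fintype p] {M : Matrix p p ℂ} (hM : M.PosSemidef)
    {c : ℝ} (hc : 0 ≤ c) : ((c : ℂ) • M).PosSemidef := by
  refine Matrix.PosSemidef.of_dotProduct_mulVec_nonneg ?_ ?_
  · unfold Matrix.IsHermitian
    rw [Matrix.conjTranspose_smul, hM.1.eq]
    congr 1
    simp
  · intro x
    rw [Matrix.smul_mulVec, dotProduct_smul]
    exact mul_nonneg (by exact_mod_cast hc) (hM.dotProduct_mulVec_nonneg x)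

/-- The semidefinite criterion for `k`-extendibility implies the simplified necessary
condition `V_AB ≥ iΩ_A ⊕ (−(1−2/k)·iΩ_B)`. -/
theorem k_ext_SDP_implies_simplified
    (k nA nB : ℕ) (hk : 2 ≤ k) (hnA : 0 < nA) (hnB : 0 < nB)
    (V : Matrix (Fin (2*nA) ⊕ Fin (2*nB)) (Fin (2*nA) ⊕ Fin (2*nB)) ℝ)
    (hV : V.IsSymm)
    (h : ∃ Δ : Matrix (Fin (2*nB)) (Fin (2*nB)) ℝ, Δ.IsSymm ∧
        (cplx Δ - Complex.I • cplx (OmegaM nB)).PosSemidef ∧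
        (cplx V -
          Matrix.fromBlocks (Complex.I • cplx (OmegaM nA)) 0 0
            ((1 - 1/(k:ℂ)) • cplx Δ
              + (Complex.I/(k:ℂ)) • cplx (OmegaM nB))).PosSemidef) :
    (cplx V -
      Matrix.fromBlocks (Complex.I • cplx (OmegaM nA)) 0 0
        ((-(1 - 2/(k:ℂ)) * Complex.I) • cplx (OmegaM nB))).PosSemidef := by
  obtain ⟨Δ, hΔsymm, hΔ, hA⟩ := h
  have hk0 : (k : ℂ) ≠ 0 := by
    have : k ≠ 0 := by omega
    exact_mod_cast this
  -- the transpose trick: Δ + iΩ is PSD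
  have hT : (cplx Δ + Complex.I • cplx (OmegaM nB)).PosSemidef := by
    have := hΔ.transpose
    rwa [Matrix.transpose_sub, Matrix.transpose_smul, cplx_transpose, cplx_transpose,
      hΔsymm.eq, OmegaM_transpose, cplx_neg, smul_neg, sub_neg_eq_add] at this
  have hc : (0:ℝ) ≤ 1 - 1/(k:ℝ) := by
    have h2 : (2:ℝ) ≤ (k:ℝ) := by exact_mod_cast hk
    have hkpos : (0:ℝ) < (k:ℝ) := by linarith
    rw [sub_nonneg, div_le_one hkpos]; linarith
  have hB : (Matrix.fromBlocks (0 : Matrix (Fin (2*nA)) (Fin (2*nA)) ℂ) 0 0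
      (((1 - 1/(k:ℝ) : ℝ) : ℂ) • (cplx Δ + Complex.I • cplx (OmegaM nB)))).PosSemidef :=
    fromBlocks_zero_posSemidef (posSemidef_real_smul hT hc)
  -- scalar identity in the bottom-right block
  have hbr : (1 - 1/(k:ℂ)) • cplx Δ + (Complex.I/(k:ℂ)) • cplx (OmegaM nB)
      = (-(1 - 2/(k:ℂ)) * Complex.I) • cplx (OmegaM nB)
        + (((1 - 1/(k:ℝ) : ℝ) : ℂ)) • (cplx Δ + Complex.I • cplx (OmegaM nB)) := by
    push_cast
    rw [smul_add, smul_smul]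
    rw [show (Complex.I/(k:ℂ)) = -(1 - 2/(k:ℂ)) * Complex.I + (1 - 1/(k:ℂ)) * Complex.I by
      field_simp; ring]
    rw [add_smul]
    abel
  have hblockeq : Matrix.fromBlocks (Complex.I • cplx (OmegaM nA)) 0 0
      ((1 - 1/(k:ℂ)) • cplx Δ + (Complex.I/(k:ℂ)) • cplx (OmegaM nB))
      = Matrix.fromBlocks (Complex.I • cplx (OmegaM nA)) 0 0
          ((-(1 - 2/(k:ℂ)) * Complex.I) • cplx (OmegaM nB))
        + Matrix.fromBlocks (0 : Matrix (Fin (2*nA)) (Fin (2*nA)) ℂ) 0 0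
          (((1 - 1/(k:ℝ) : ℝ) : ℂ) • (cplx Δ + Complex.I • cplx (OmegaM nB))) := by
    rw [hbr, Matrix.fromBlocks_add]
    simp
  have key : cplx V -
      Matrix.fromBlocks (Complex.I • cplx (OmegaM nA)) 0 0
        ((-(1 - 2/(k:ℂ)) * Complex.I) • cplx (OmegaM nB)) =
      (cplx V -
        Matrix.fromBlocks (Complex.I • cplx (OmegaM nA)) 0 0
          ((1 - 1/(k:ℂ)) • cplx Δ + (Complex.I/(k:ℂ)) • cplx (OmegaM nB))) +
      Matrix.fromBlocks (0 : Matrix (Fin (2*nA)) (Fin (2*nA)) ℂ) 0 0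
        (((1 - 1/(k:ℝ) : ℝ) : ℂ) • (cplx Δ + Complex.I • cplx (OmegaM nB))) := by
    rw [hblockeq]; abel
  rw [key]
  exact hA.add hB
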